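/- If a strongly connected finite graph G with edges labelled by vectors in ℤ^d satisfies the disjunction of mean payoff objectives ⋁_{i∈[1,d]} MP_i, then there exists a single coordinate i ∈ [1,d] such that every cycle of G has nonnegative total weight in coordinate i. -/

import Mathlib

open Filter Finset

namespace MPAux

variable {V : Type*} {d : ℕ}

/-- A finite path: a length, a vertex function and a weight function. -/
structure FP (V : Type*) (d : ℕ) where
  len : ℕ
  v : ℕ → V
  w : ℕ → Fin d → ℤ

/-- The finite path consists of actual edges of `E`. -/
def FP.Ok (E : V → (Fin d → ℤ) → V → Prop) (p : FP V d) : Prop :=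
  ∀ k < p.len, E (p.v k) (p.w k) (p.v (k + 1))

/-- Concatenation of finite paths. -/
def FP.app (p q : FP V d) : FP V d :=
  ⟨p.len + q.len,
   fun n => if n < p.len then p.v n else q.v (n - p.len),
   fun n => if n < p.len then p.w n else q.w (n - p.len)⟩

/-- `k`-fold repetition of a finite path (intended for cycles). -/
def FP.rep (p : FP V d) (k : ℕ) : FP V d :=
  ⟨k * p.len, fun n => p.v (n % p.len), fun n => p.w (n % p.len)⟩

lemma app_len (p q : FP V d) : (p.app q).len = p.len + q.len := rfl

lemma app_v_of_ge (p q : FP V d) {n : ℕ} (h : p.len ≤ n) :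
    (p.app q).v n = q.v (n - p.len) := by
  simp [FP.app, Nat.not_lt.mpr h]

lemma app_v_of_le (p q : FP V d) (hc : p.v p.len = q.v 0) {n : ℕ} (h : n ≤ p.len) :
    (p.app q).v n = p.v n := by
  rcases lt_or_eq_of_le h with h | h
  · simp [FP.app, h]
  · subst h
    simp [FP.app, hc]

lemma app_w_of_lt (p q : FP V d) {n : ℕ} (h : n < p.len) : (p.app q).w n = p.w n := by
  simp [FP.app, h]

lemma app_w_of_ge (p q : FP V d) {n : ℕ} (h : p.len ≤ n) :
    (p.app q).w n = q.w (n - p.len) := by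
  simp [FP.app, Nat.not_lt.mpr h]

lemma app_ok {E : V → (Fin d → ℤ) → V → Prop} {p q : FP V d}
    (hp : p.Ok E) (hq : q.Ok E) (hc : p.v p.len = q.v 0) : (p.app q).Ok E := by
  intro k hk
  rw [app_len] at hk
  rcases lt_or_ge k p.len with h | h
  · rw [app_v_of_le p q hc (le_of_lt h), app_w_of_lt p q h, app_v_of_le p q hc h]
    exact hp k h
  · rw [app_v_of_ge p q h, app_w_of_ge p q h,
      app_v_of_ge p q (le_trans h (Nat.le_succ k))]
    have h2 : k + 1 - p.len = (k - p.len) + 1 := by omega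
    rw [h2]
    exact hq _ (by omega)

lemma app_sum (p q : FP V d) (i : Fin d) (n : ℕ) :
    ∑ k ∈ range (p.len + n), (p.app q).w k i
      = (∑ k ∈ range p.len, p.w k i) + ∑ k ∈ range n, q.w k i := by
  rw [Finset.sum_range_add]
  congr 1
  · exact Finset.sum_congr rfl fun k hk => by
      rw [app_w_of_lt p q (mem_range.mp hk)]
  · exact Finset.sum_congr rfl fun k hk => by
      rw [app_w_of_ge p q (Nat.le_add_right _ _)]
      simp

lemma rep_mod_succ {m j : ℕ} (hm : 0 < m) :
    (j + 1) % m = (j % m + 1) % m := by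
  conv_lhs => rw [← Nat.mod_add_div j m]
  rw [Nat.add_right_comm, Nat.add_mul_mod_self_left]

lemma rep_ok {E : V → (Fin d → ℤ) → V → Prop} {p : FP V d}
    (hm : 0 < p.len) (hc : p.v p.len = p.v 0) (hp : p.Ok E) (k : ℕ) :
    (p.rep k).Ok E := by
  intro j hj
  have h1 : j % p.len < p.len := Nat.mod_lt _ hm
  show E (p.v (j % p.len)) (p.w (j % p.len)) (p.v ((j + 1) % p.len))
  have key : (j + 1) % p.len = (j % p.len + 1) % p.len := rep_mod_succ hm
  rcases Nat.lt_or_ge (j % p.len + 1) p.len with h | h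
  · have e : (j + 1) % p.len = j % p.len + 1 := by
      rw [key]; exact Nat.mod_eq_of_lt h
    rw [e]
    exact hp _ h1
  · have h2 : j % p.len + 1 = p.len := by omega
    have e : (j + 1) % p.len = 0 := by rw [key, h2, Nat.mod_self]
    rw [e, ← hc]
    have := hp _ h1
    rw [h2] at this
    exact this

lemma rep_v_zero (p : FP V d) (k : ℕ) : (p.rep k).v 0 = p.v 0 := by
  simp [FP.rep]

lemma rep_v_end (p : FP V d) (k : ℕ) : (p.rep k).v (k * p.len) = p.v 0 := by
  simp [FP.rep, Nat.mul_mod_left]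

lemma rep_sum (p : FP V d) (k : ℕ) (i : Fin d) :
    ∑ j ∈ range (k * p.len), (p.rep k).w j i = k * ∑ j ∈ range p.len, p.w j i := by
  induction k with
  | zero => simp
  | succ k ih =>
    have h : (k + 1) * p.len = k * p.len + p.len := by ring
    rw [h, Finset.sum_range_add]
    have e1 : ∑ j ∈ range (k * p.len), (p.rep (k + 1)).w j i
        = ∑ j ∈ range (k * p.len), (p.rep k).w j i := rfl
    have e2 : ∑ j ∈ range p.len, (p.rep (k + 1)).w (k * p.len + j) i
        = ∑ j ∈ range p.len, p.w j i := by
      refine Finset.sum_congr rfl fun j hj => ?_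
      have : (k * p.len + j) % p.len = j := by
        rw [Nat.add_comm, Nat.add_mul_mod_self_right,
          Nat.mod_eq_of_lt (mem_range.mp hj)]
      show p.w ((k * p.len + j) % p.len) i = p.w j i
      rw [this]
    rw [e1, e2, ih]
    push_cast
    ring

/-- The increasing sequence of finite paths, obtained by repeatedly appending
segments (each segment may depend on the stage and on the current length). -/
def buildQ (v0 : V) (seg : ℕ → ℕ → FP V d) : ℕ → FP V d
  | 0 => ⟨0, fun _ => v0, fun _ _ => 0⟩
  | (t + 1) => (buildQ v0 seg t).app (seg t (buildQ v0 seg t).len)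

end MPAux

/-- if a strongly connected finite graph with edges labelled in `ℤ^d`
(`d ≥ 1`) satisfies the disjunction of mean payoff objectives (every infinite path has
some coordinate whose liminf average is nonnegative), then there is a single coordinate
`i` in which every cycle has nonnegative total weight. -/
theorem strongly_connected_disj_mean_payoff {V : Type*} [Finite V] {d : ℕ} (hd : 0 < d)
    (E : V → (Fin d → ℤ) → V → Prop)
    (hconn : ∀ v v' : V, ∃ (m : ℕ) (π : ℕ → V) (c : ℕ → Fin d → ℤ),
      π 0 = v ∧ π m = v' ∧ ∀ k < m, E (π k) (c k) (π (k + 1)))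
    (hsat : ∀ (π : ℕ → V) (c : ℕ → Fin d → ℤ),
      (∀ n, E (π n) (c n) (π (n + 1))) →
      ∃ i : Fin d,
        0 ≤ atTop.liminf (fun n : ℕ => (∑ k ∈ range n, (c k i : ℝ)) / n)) :
    ∃ i : Fin d, ∀ (m : ℕ) (π : ℕ → V) (c : ℕ → Fin d → ℤ),
      0 < m → π 0 = π m → (∀ k < m, E (π k) (c k) (π (k + 1))) →
      0 ≤ ∑ k ∈ range m, c k i := by
  classical
  by_contra hcon
  push_neg at hcon
  -- for each coordinate i, choose a cycle with negative total weight in coordinate i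
  choose m pc cc hm h0 hEc hneg using hcon
  -- the coordinate scheduled at stage t
  obtain ⟨ι, hι⟩ : ∃ ι : ℕ → Fin d, ∀ t, (ι t : ℕ) = t % d :=
    ⟨fun t => ⟨t % d, Nat.mod_lt t hd⟩, fun t => rfl⟩
  have hιsucc : ∀ t, ι (t + 1) = ι ((ι t : ℕ) + 1) := by
    intro t
    apply Fin.ext
    rw [hι, hι, hι]
    conv_lhs => rw [Nat.add_mod]
    conv_rhs => rw [Nat.add_mod, Nat.mod_mod_of_dvd _ dvd_rfl]
  -- connectors between consecutive scheduled cycles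
  choose ℓ pn cn hn0 hnE hnEd using
    fun j : Fin d => hconn (pc j 0) (pc (ι ((j : ℕ) + 1)) 0)
  -- global bound on all weights used
  obtain ⟨B, hBdef⟩ : ∃ B : ℕ, B = ∑ j : Fin d,
      ((∑ k ∈ range (m j), ∑ i' : Fin d, (cc j k i').natAbs)
        + ∑ k ∈ range (ℓ j), ∑ i' : Fin d, (cn j k i').natAbs) := ⟨_, rfl⟩
  have hBcyc : ∀ (j : Fin d) (k : ℕ), k < m j → ∀ i' : Fin d, (cc j k i').natAbs ≤ B := by
    intro j k hk i'
    have t1 : (cc j k i').natAbs ≤ ∑ i'' : Fin d, (cc j k i'').natAbs :=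
      Finset.single_le_sum (f := fun i'' : Fin d => (cc j k i'').natAbs)
        (fun _ _ => Nat.zero_le _) (Finset.mem_univ i')
    have t2 : (∑ i'' : Fin d, (cc j k i'').natAbs)
        ≤ ∑ k' ∈ range (m j), ∑ i'' : Fin d, (cc j k' i'').natAbs :=
      Finset.single_le_sum (f := fun k' => ∑ i'' : Fin d, (cc j k' i'').natAbs)
        (fun _ _ => Nat.zero_le _) (Finset.mem_range.mpr hk)
    have t4 : ((∑ k' ∈ range (m j), ∑ i'' : Fin d, (cc j k' i'').natAbs)
          + ∑ k' ∈ range (ℓ j), ∑ i'' : Fin d, (cn j k' i'').natAbs) ≤ B := by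
      rw [hBdef]
      exact Finset.single_le_sum (f := fun j' : Fin d =>
        (∑ k' ∈ range (m j'), ∑ i'' : Fin d, (cc j' k' i'').natAbs)
          + ∑ k' ∈ range (ℓ j'), ∑ i'' : Fin d, (cn j' k' i'').natAbs)
        (fun _ _ => Nat.zero_le _) (Finset.mem_univ j)
    omega
  have hBconn : ∀ (j : Fin d) (k : ℕ), k < ℓ j → ∀ i' : Fin d, (cn j k i').natAbs ≤ B := by
    intro j k hk i'
    have t1 : (cn j k i').natAbs ≤ ∑ i'' : Fin d, (cn j k i'').natAbs :=
      Finset.single_le_sum (f := fun i'' : Fin d => (cn j k i'').natAbs)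
        (fun _ _ => Nat.zero_le _) (Finset.mem_univ i')
    have t2 : (∑ i'' : Fin d, (cn j k i'').natAbs)
        ≤ ∑ k' ∈ range (ℓ j), ∑ i'' : Fin d, (cn j k' i'').natAbs :=
      Finset.single_le_sum (f := fun k' => ∑ i'' : Fin d, (cn j k' i'').natAbs)
        (fun _ _ => Nat.zero_le _) (Finset.mem_range.mpr hk)
    have t4 : ((∑ k' ∈ range (m j), ∑ i'' : Fin d, (cc j k' i'').natAbs)
          + ∑ k' ∈ range (ℓ j), ∑ i'' : Fin d, (cn j k' i'').natAbs) ≤ B := by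
      rw [hBdef]
      exact Finset.single_le_sum (f := fun j' : Fin d =>
        (∑ k' ∈ range (m j'), ∑ i'' : Fin d, (cc j' k' i'').natAbs)
          + ∑ k' ∈ range (ℓ j'), ∑ i'' : Fin d, (cn j' k' i'').natAbs)
        (fun _ _ => Nat.zero_le _) (Finset.mem_univ j)
    omega
  -- the basic finite paths
  obtain ⟨cyc, hcycdef⟩ : ∃ cyc : Fin d → MPAux.FP V d,
      ∀ j, cyc j = ⟨m j, pc j, cc j⟩ := ⟨_, fun _ => rfl⟩
  obtain ⟨con, hcondef⟩ : ∃ con : Fin d → MPAux.FP V d,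
      ∀ j, con j = ⟨ℓ j, pn j, cn j⟩ := ⟨_, fun _ => rfl⟩
  -- segments
  obtain ⟨seg, hsegdef⟩ : ∃ seg : ℕ → ℕ → MPAux.FP V d,
      ∀ t N, seg t N = ((cyc (ι t)).rep (2 * B * N + N + 1)).app (con (ι t)) :=
    ⟨_, fun _ _ => rfl⟩
  -- basic facts about the pieces
  have hcyclen : ∀ j, (cyc j).len = m j := fun j => by rw [hcycdef]
  have hconlen : ∀ j, (con j).len = ℓ j := fun j => by rw [hcondef]
  have hcycok : ∀ j, (cyc j).Ok E := by
    intro j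
    rw [hcycdef]
    exact hEc j
  have hconok : ∀ j, (con j).Ok E := by
    intro j
    rw [hcondef]
    exact hnEd j
  have hcycclosed : ∀ j, (cyc j).v (cyc j).len = (cyc j).v 0 := by
    intro j
    rw [hcycdef]
    exact (h0 j).symm
  have hseglen : ∀ t N, (seg t N).len = (2 * B * N + N + 1) * m (ι t) + ℓ (ι t) := by
    intro t N
    rw [hsegdef, MPAux.app_len]
    show (2 * B * N + N + 1) * (cyc (ι t)).len + (con (ι t)).len = _
    rw [hcyclen, hconlen]
  have hsegpos : ∀ t N, 1 ≤ (seg t N).len := by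
    intro t N
    rw [hseglen]
    have h1 := hm (ι t)
    have h2 : 0 < (2 * B * N + N + 1) * m (ι t) := Nat.mul_pos (by omega) h1
    omega
  have hrepcompat : ∀ t N,
      ((cyc (ι t)).rep (2 * B * N + N + 1)).v ((cyc (ι t)).rep (2 * B * N + N + 1)).len
        = (con (ι t)).v 0 := by
    intro t N
    show ((cyc (ι t)).rep (2 * B * N + N + 1)).v ((2 * B * N + N + 1) * (cyc (ι t)).len) = _
    rw [MPAux.rep_v_end, hcycdef, hcondef]
    exact (hn0 (ι t)).symm
  have hsegstart : ∀ t N, (seg t N).v 0 = pc (ι t) 0 := by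
    intro t N
    rw [hsegdef, MPAux.app_v_of_le _ _ (hrepcompat t N) (Nat.zero_le _),
      MPAux.rep_v_zero, hcycdef]
  have hsegend : ∀ t N, (seg t N).v (seg t N).len = pc (ι (t + 1)) 0 := by
    intro t N
    rw [hsegdef, MPAux.app_len, MPAux.app_v_of_ge _ _ (Nat.le_add_right _ _),
      Nat.add_sub_cancel_left, hconlen, hcondef]
    show pn (ι t) (ℓ (ι t)) = _
    rw [hnE (ι t), ← hιsucc t]
  have hsegok : ∀ t N, (seg t N).Ok E := by
    intro t N
    rw [hsegdef]
    refine MPAux.app_ok ?_ (hconok _) (hrepcompat t N)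
    refine MPAux.rep_ok ?_ (hcycclosed _) (hcycok _) _
    rw [hcyclen]
    exact hm _
  have hsegwbd : ∀ t N n, n < (seg t N).len → ∀ i' : Fin d,
      ((seg t N).w n i').natAbs ≤ B := by
    intro t N n hn i'
    rw [hsegdef] at hn ⊢
    rcases Nat.lt_or_ge n ((cyc (ι t)).rep (2 * B * N + N + 1)).len with h | h
    · rw [MPAux.app_w_of_lt _ _ h]
      show ((cyc (ι t)).w (n % (cyc (ι t)).len) i').natAbs ≤ B
      have hmlt : n % (cyc (ι t)).len < m (ι t) := by
        rw [hcyclen]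
        exact Nat.mod_lt _ (hm _)
      have : (cyc (ι t)).w (n % (cyc (ι t)).len) = cc (ι t) (n % (cyc (ι t)).len) := by
        rw [hcycdef]
      rw [this]
      exact hBcyc _ _ hmlt i'
    · rw [MPAux.app_w_of_ge _ _ h]
      rw [MPAux.app_len] at hn
      have hlt : n - ((cyc (ι t)).rep (2 * B * N + N + 1)).len < (con (ι t)).len := by
        omega
      rw [hconlen] at hlt
      have : (con (ι t)).w (n - ((cyc (ι t)).rep (2 * B * N + N + 1)).len)
          = cn (ι t) (n - ((cyc (ι t)).rep (2 * B * N + N + 1)).len) := by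
        rw [hcondef]
      rw [this]
      exact hBconn _ _ hlt i'
  have hsegsum : ∀ t N (i' : Fin d),
      ∑ j ∈ range ((2 * B * N + N + 1) * m (ι t)), (seg t N).w j i'
        = (2 * B * N + N + 1) * ∑ k ∈ range (m (ι t)), cc (ι t) k i' := by
    intro t N i'
    rw [hsegdef]
    have hrl : ((cyc (ι t)).rep (2 * B * N + N + 1)).len = (2 * B * N + N + 1) * m (ι t) := by
      show (2 * B * N + N + 1) * (cyc (ι t)).len = _
      rw [hcyclen]
    have happ := MPAux.app_sum ((cyc (ι t)).rep (2 * B * N + N + 1)) (con (ι t)) i' 0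
    rw [Finset.range_zero, Finset.sum_empty, add_zero, add_zero] at happ
    have hrs := MPAux.rep_sum (cyc (ι t)) (2 * B * N + N + 1) i'
    rw [hrl] at happ
    rw [hcyclen] at hrs
    rw [happ, hrs]
    congr 1
    refine Finset.sum_congr rfl fun k _ => ?_
    rw [hcycdef]
  -- the chain of finite paths
  obtain ⟨Q, hQ0, hQs⟩ : ∃ Q : ℕ → MPAux.FP V d,
      Q 0 = ⟨0, fun _ => pc (ι 0) 0, fun _ _ => (0 : ℤ)⟩ ∧
      ∀ t, Q (t + 1) = (Q t).app (seg t (Q t).len) :=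
    ⟨MPAux.buildQ (pc (ι 0) 0) seg, rfl, fun _ => rfl⟩
  have hQlen : ∀ t, (Q (t + 1)).len = (Q t).len + (seg t (Q t).len).len := by
    intro t
    rw [hQs t, MPAux.app_len]
  have hQlenge : ∀ t, t ≤ (Q t).len := by
    intro t
    induction t with
    | zero => exact Nat.zero_le _
    | succ t ih =>
      rw [hQlen]
      have := hsegpos t (Q t).len
      omega
  have hQend : ∀ t, (Q t).v (Q t).len = pc (ι t) 0 := by
    intro t
    induction t with
    | zero => rw [hQ0]
    | succ t ih =>
      rw [hQs t, MPAux.app_len, MPAux.app_v_of_ge _ _ (Nat.le_add_right _ _),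
        Nat.add_sub_cancel_left]
      exact hsegend t (Q t).len
  have hQok : ∀ t, (Q t).Ok E := by
    intro t
    induction t with
    | zero =>
      intro k hk
      rw [hQ0] at hk
      exact absurd hk (Nat.not_lt_zero k)
    | succ t ih =>
      rw [hQs t]
      exact MPAux.app_ok ih (hsegok _ _) (by rw [hQend t, hsegstart])
  have hQwbd : ∀ t n, n < (Q t).len → ∀ i' : Fin d, ((Q t).w n i').natAbs ≤ B := by
    intro t
    induction t with
    | zero =>
      intro n hn
      rw [hQ0] at hn
      exact absurd hn (Nat.not_lt_zero n)
    | succ t ih =>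
      intro n hn i'
      rw [hQs t]
      rcases Nat.lt_or_ge n (Q t).len with h | h
      · rw [MPAux.app_w_of_lt _ _ h]
        exact ih n h i'
      · rw [MPAux.app_w_of_ge _ _ h]
        rw [hQlen] at hn
        exact hsegwbd t (Q t).len _ (by omega) i'
  have hQpre_v : ∀ t n, n ≤ (Q t).len → (Q (t + 1)).v n = (Q t).v n := by
    intro t n hn
    rw [hQs t, MPAux.app_v_of_le _ _ (by rw [hQend t, hsegstart]) hn]
  have hQpre_w : ∀ t n, n < (Q t).len → (Q (t + 1)).w n = (Q t).w n := by
    intro t n hn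
    rw [hQs t, MPAux.app_w_of_lt _ _ hn]
  have hlenmono : ∀ s t : ℕ, s ≤ t → (Q s).len ≤ (Q t).len := by
    intro s t hst
    induction t, hst using Nat.le_induction with
    | base => exact le_refl _
    | succ t hst ih =>
      rw [hQlen]
      omega
  have hmono_v : ∀ s t : ℕ, s ≤ t → ∀ n, n ≤ (Q s).len → (Q t).v n = (Q s).v n := by
    intro s t hst
    induction t, hst using Nat.le_induction with
    | base => intro n _; rfl
    | succ t hst ih =>
      intro n hn
      rw [hQpre_v t n (le_trans hn (hlenmono s t hst)), ih n hn]
  have hmono_w : ∀ s t : ℕ, s ≤ t → ∀ n, n < (Q s).len → (Q t).w n = (Q s).w n := by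
    intro s t hst
    induction t, hst using Nat.le_induction with
    | base => intro n _; rfl
    | succ t hst ih =>
      intro n hn
      rw [hQpre_w t n (lt_of_lt_of_le hn (hlenmono s t hst)), ih n hn]
  -- the infinite path
  obtain ⟨pi, cg, hpidef, hcdef⟩ : ∃ (pi : ℕ → V) (cg : ℕ → Fin d → ℤ),
      (∀ n, pi n = (Q (n + 1)).v n) ∧ (∀ n, cg n = (Q (n + 1)).w n) :=
    ⟨_, _, fun _ => rfl, fun _ => rfl⟩
  have hpi : ∀ t n, n ≤ (Q t).len → pi n = (Q t).v n := by
    intro t n hn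
    rw [hpidef]
    rcases le_total (n + 1) t with h | h
    · exact (hmono_v (n + 1) t h n (le_trans (Nat.le_succ n) (hQlenge (n + 1)))).symm
    · exact hmono_v t (n + 1) h n hn
  have hcg : ∀ t n, n < (Q t).len → cg n = (Q t).w n := by
    intro t n hn
    rw [hcdef]
    rcases le_total (n + 1) t with h | h
    · exact (hmono_w (n + 1) t h n (Nat.lt_of_lt_of_le (Nat.lt_succ_self n)
        (hQlenge (n + 1)))).symm
    · exact hmono_w t (n + 1) h n hn
  have hE : ∀ n, E (pi n) (cg n) (pi (n + 1)) := by
    intro n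
    have h1 : n < (Q (n + 1)).len := Nat.lt_of_lt_of_le (Nat.lt_succ_self n) (hQlenge (n + 1))
    have := hQok (n + 1) n h1
    rw [hpidef n, hcdef n, hpi (n + 1) (n + 1) (hQlenge (n + 1))]
    exact this
  obtain ⟨i, hlim⟩ := hsat pi cg hE
  -- global bound on weights of the infinite path
  have hcbd : ∀ n (i' : Fin d), (cg n i').natAbs ≤ B := by
    intro n i'
    rw [hcdef]
    exact hQwbd (n + 1) n (Nat.lt_of_lt_of_le (Nat.lt_succ_self n) (hQlenge (n + 1))) i'
  have hcbdR : ∀ n (i' : Fin d), |(cg n i' : ℝ)| ≤ (B : ℝ) := by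
    intro n i'
    have := hcbd n i'
    rw [← Int.cast_abs]
    rw [Int.abs_eq_natAbs]
    exact_mod_cast this
  -- the cycle sum at coordinate i is at most -1
  have hsneg : ∑ k ∈ range (m i), cc i k i ≤ -1 := by
    have := hneg i
    omega
  have hmi : 1 ≤ (m i : ℤ) := by exact_mod_cast hm i
  -- frequently the average is at most -1/(2 m i)
  have hfreq : ∃ᶠ n in atTop,
      (∑ k ∈ range n, (cg k i : ℝ)) / n ≤ -(1 / (2 * (m i : ℝ))) := by
    rw [Filter.frequently_atTop]
    intro a
    have hit : ι ((i : ℕ) + a * d) = i := by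
      apply Fin.ext
      rw [hι, Nat.add_mul_mod_self_right, Nat.mod_eq_of_lt i.isLt]
    set t := (i : ℕ) + a * d with ht
    set N := (Q t).len with hN
    set K := 2 * B * N + N + 1 with hK
    set nt := N + K * m i with hnt
    have hta : a ≤ t := by
      have : a ≤ a * d := Nat.le_mul_of_pos_right a hd
      omega
    have hant : a ≤ nt := le_trans hta (le_trans (hQlenge t) (Nat.le_add_right _ _))
    refine ⟨nt, hant, ?_⟩
    -- nt fits inside Q (t+1)
    have hntlen : nt ≤ (Q (t + 1)).len := by
      rw [hQlen, hseglen, hit, ← hN, ← hK]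
      omega
    -- the partial sum at nt
    have hA : ∑ k ∈ range nt, cg k i
        = (∑ k ∈ range N, cg k i) + (K : ℤ) * ∑ k ∈ range (m i), cc i k i := by
      have e1 : ∑ k ∈ range nt, cg k i = ∑ k ∈ range nt, (Q (t + 1)).w k i :=
        Finset.sum_congr rfl fun k hk =>
          congrFun (hcg (t + 1) k (lt_of_lt_of_le (mem_range.mp hk) hntlen)) i
      have e2 : ∑ k ∈ range N, cg k i = ∑ k ∈ range N, (Q t).w k i :=
        Finset.sum_congr rfl fun k hk =>
          congrFun (hcg t k (mem_range.mp hk)) i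
      rw [e1, e2, hQs t, hnt]
      rw [MPAux.app_sum (Q t) (seg t (Q t).len) i (K * m i)]
      congr 1
      have := hsegsum t N i
      rw [hit] at this
      rw [← hK] at this
      rw [this]
      push_cast
      rw [hK]; push_cast
      ring
    -- bound on the prefix sum
    have hS : |∑ k ∈ range N, cg k i| ≤ (B : ℤ) * N := by
      calc |∑ k ∈ range N, cg k i| ≤ ∑ k ∈ range N, |cg k i| :=
            Finset.abs_sum_le_sum_abs _ _
        _ ≤ ∑ _k ∈ range N, (B : ℤ) := by
            refine Finset.sum_le_sum fun k _ => ?_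
            rw [Int.abs_eq_natAbs]
            exact_mod_cast hcbd k i
        _ = (B : ℤ) * N := by
            rw [Finset.sum_const, Finset.card_range]
            push_cast
            ring
    have hSle : ∑ k ∈ range N, cg k i ≤ (B : ℤ) * N := le_trans (le_abs_self _) hS
    -- the key integer inequality
    have hKZ : (K : ℤ) = 2 * B * N + N + 1 := by rw [hK]; push_cast; ring
    have hntZ : (nt : ℤ) = (N : ℤ) + (K : ℤ) * (m i : ℤ) := by rw [hnt]; push_cast; ring
    have key : 2 * (m i : ℤ) * (∑ k ∈ range nt, cg k i) + nt ≤ 0 := by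
      rw [hA, hntZ, hKZ]
      have hB0 : (0 : ℤ) ≤ (B : ℤ) := Int.natCast_nonneg _
      have hN0 : (0 : ℤ) ≤ (N : ℤ) := Int.natCast_nonneg _
      nlinarith [mul_le_mul_of_nonneg_left hsneg (by positivity :
          (0 : ℤ) ≤ 2 * (m i : ℤ) * (2 * B * N + N + 1)),
        mul_le_mul_of_nonneg_left hSle (by positivity : (0 : ℤ) ≤ 2 * (m i : ℤ)),
        mul_le_mul_of_nonneg_left hmi (mul_nonneg hB0 hN0),
        mul_le_mul_of_nonneg_left hmi hN0]
    -- the real inequality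
    have hnt1 : 1 ≤ nt := by
      have : 1 ≤ K * m i := Nat.one_le_iff_ne_zero.mpr (by
        have := hm i
        positivity)
      omega
    have hntR : (0 : ℝ) < (nt : ℝ) := by exact_mod_cast hnt1
    have h2mR : (0 : ℝ) < 2 * (m i : ℝ) := by
      have : (0 : ℝ) < (m i : ℝ) := by exact_mod_cast hm i
      linarith
    have ecast : (∑ k ∈ range nt, (cg k i : ℝ)) = ((∑ k ∈ range nt, cg k i : ℤ) : ℝ) := by
      push_cast
      rfl
    have hnegdiv : -(1 / (2 * (m i : ℝ))) = (-1) / (2 * (m i : ℝ)) := by ring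
    rw [ecast, hnegdiv, div_le_div_iff₀ hntR h2mR]
    have keyR : 2 * (m i : ℝ) * ((∑ k ∈ range nt, cg k i : ℤ) : ℝ) + (nt : ℝ) ≤ 0 := by
      exact_mod_cast key
    linarith
  -- the averages are bounded below
  have hbdd : IsBoundedUnder (· ≥ ·) atTop
      (fun n : ℕ => (∑ k ∈ range n, (cg k i : ℝ)) / n) := by
    refine isBoundedUnder_of ⟨-(B : ℝ), fun n => ?_⟩
    rcases Nat.eq_zero_or_pos n with h | h
    · subst h
      simp
    · have hn : (0 : ℝ) < (n : ℝ) := by exact_mod_cast h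
      rw [ge_iff_le, le_div_iff₀ hn]
      have hsum : (n : ℝ) * (-(B : ℝ)) ≤ ∑ k ∈ range n, (cg k i : ℝ) := by
        calc (n : ℝ) * (-(B : ℝ)) = ∑ _k ∈ range n, (-(B : ℝ)) := by
              rw [Finset.sum_const, Finset.card_range, nsmul_eq_mul]
          _ ≤ ∑ k ∈ range n, (cg k i : ℝ) := by
              refine Finset.sum_le_sum fun k _ => ?_
              have := hcbdR k i
              have := neg_abs_le ((cg k i : ℝ))
              linarith
      linarith
  have hle : atTop.liminf (fun n : ℕ => (∑ k ∈ range n, (cg k i : ℝ)) / n)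
      ≤ -(1 / (2 * (m i : ℝ))) :=
    Filter.liminf_le_of_frequently_le hfreq hbdd
  have hpos : (0 : ℝ) < 1 / (2 * (m i : ℝ)) := by
    have : (0 : ℝ) < (m i : ℝ) := by exact_mod_cast hm i
    positivity
  linarith
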